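/- arXiv:1703.06314 — 4 statements merged into one kernel-verified Lean document; each statement's English description precedes it below -/
import Mathlib

section
/- For any two distinct indices s, t ∈ F ∪ {∞}, the relational composition R_s ∘ R_t equals {(p, r) ∈ (F × F) × (F × F) : p ≠ r, (p, r) ∉ R_s, and (p, r) ∉ R_t}; that is, there exists z with (p, z) ∈ R_s and (z, r) ∈ R_t if and only if p ≠ r and the slope of the pair (p, r) is neither s nor t. -/
/-- The "slope `s`" relation on the affine plane `F × F`.  `some s` is the
relation of lines with slope `s`; `none` is the relation `R_∞` of vertical lines. -/
def slopeRel {F : Type*} [Field F] (s : Option F) (p r : F × F) : Prop :=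
  match s with
  | some s => p.1 ≠ r.1 ∧ r.2 - p.2 = s * (r.1 - p.1)
  | none => p.1 = r.1 ∧ p.2 ≠ r.2

/-- For distinct slopes `s ≠ t`, the composition `R_s ∘ R_t` is exactly the set of
pairs of distinct points whose slope is neither `s` nor `t`. -/
theorem stmt2 (q : ℕ) (hq : IsPrimePow q) (F : Type*) [Field F] [Fintype F]
    (hcard : Fintype.card F = q) :
    ∀ s t : Option F, s ≠ t → ∀ p r : F × F,
      (∃ z : F × F, slopeRel s p z ∧ slopeRel t z r) ↔
        (p ≠ r ∧ ¬ slopeRel s p r ∧ ¬ slopeRel t p r) := by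
  intro s t hst p r
  obtain ⟨p1, p2⟩ := p
  obtain ⟨r1, r2⟩ := r
  rcases s with _ | a <;> rcases t with _ | b
  · exact absurd rfl hst
  · -- s = ∞, t = some b
    constructor
    · rintro ⟨⟨z1, z2⟩, ⟨h1, h2⟩, h3, h4⟩
      simp only at h1 h2 h3 h4
      subst h1
      refine ⟨?_, ?_, ?_⟩
      · intro h
        rw [Prod.mk.injEq] at h
        exact h3 h.1
      · rintro ⟨h5, _⟩
        exact h3 h5
      · rintro ⟨hne, heq⟩
        exact h2 (by linear_combination h4 - heq)
    · rintro ⟨hpr, hs, ht⟩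
      by_cases h : p1 = r1
      · subst h
        exfalso
        have hp2 : p2 = r2 := by
          by_contra hc
          exact hs ⟨rfl, hc⟩
        exact hpr (by rw [hp2])
      · refine ⟨(p1, r2 - b * (r1 - p1)), ⟨rfl, ?_⟩, h, by ring⟩
        intro heq
        exact ht ⟨h, by linear_combination -heq⟩
  · -- s = some a, t = ∞
    constructor
    · rintro ⟨⟨z1, z2⟩, ⟨h1, h2⟩, h3, h4⟩
      simp only at h1 h2 h3 h4
      subst h3
      refine ⟨?_, ?_, ?_⟩
      · intro h
        rw [Prod.mk.injEq] at h
        exact h1 h.1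
      · rintro ⟨hne, heq⟩
        exact h4 (by linear_combination h2 - heq)
      · rintro ⟨h5, _⟩
        exact h1 h5
    · rintro ⟨hpr, hs, ht⟩
      by_cases h : p1 = r1
      · subst h
        exfalso
        have hp2 : p2 = r2 := by
          by_contra hc
          exact ht ⟨rfl, hc⟩
        exact hpr (by rw [hp2])
      · refine ⟨(r1, p2 + a * (r1 - p1)), ⟨h, by ring⟩, rfl, ?_⟩
        intro heq
        exact hs ⟨h, by linear_combination -heq⟩
  · -- s = some a, t = some b
    have hab : a ≠ b := by rintro rfl; exact hst rfl
    constructor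
    · rintro ⟨⟨z1, z2⟩, ⟨h1, h2⟩, h3, h4⟩
      simp only at h1 h2 h3 h4
      refine ⟨?_, ?_, ?_⟩
      · intro h
        rw [Prod.mk.injEq] at h
        obtain ⟨rfl, rfl⟩ := h
        have hz : (a - b) * (z1 - p1) = 0 := by linear_combination -h2 - h4
        rcases mul_eq_zero.mp hz with h | h
        · exact hab (sub_eq_zero.mp h)
        · exact h1 (sub_eq_zero.mp h).symm
      · rintro ⟨hne, heq⟩
        have hz : (a - b) * (r1 - z1) = 0 := by linear_combination h2 + h4 - heq
        rcases mul_eq_zero.mp hz with h | h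
        · exact hab (sub_eq_zero.mp h)
        · exact h3 (sub_eq_zero.mp h).symm
      · rintro ⟨hne, heq⟩
        have hz : (a - b) * (z1 - p1) = 0 := by linear_combination heq - h2 - h4
        rcases mul_eq_zero.mp hz with h | h
        · exact hab (sub_eq_zero.mp h)
        · exact h1 (sub_eq_zero.mp h).symm
    · rintro ⟨hpr, hs, ht⟩
      have hab' : a - b ≠ 0 := sub_ne_zero.mpr hab
      set x : F := (r2 - p2 + a * p1 - b * r1) / (a - b) with hx
      have hxe : x * (a - b) = r2 - p2 + a * p1 - b * r1 := by
        rw [hx]; exact div_mul_cancel₀ _ hab'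
      have hxp : x ≠ p1 := by
        intro h
        rw [h] at hxe
        by_cases hc : p1 = r1
        · subst hc
          exact hpr (Prod.ext rfl (by linear_combination hxe))
        · exact ht ⟨hc, by linear_combination -hxe⟩
      have hxr : x ≠ r1 := by
        intro h
        rw [h] at hxe
        by_cases hc : p1 = r1
        · subst hc
          exact hpr (Prod.ext rfl (by linear_combination hxe))
        · exact hs ⟨hc, by linear_combination -hxe⟩
      refine ⟨(x, p2 + a * (x - p1)), ⟨fun h => hxp h.symm, by ring⟩, hxr, ?_⟩
      show r2 - (p2 + a * (x - p1)) = b * (r1 - x)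
      linear_combination -hxe
end

section
/- Fix u, z ∈ D. The number of functions g : D × D → Fin n for which there exist an index s ∈ F ∪ {∞} and a color j ∈ Fin n such that either no w ∈ D satisfies (u,w) ∈ R_s and g(w,z) = j, or no w ∈ D satisfies (z,w) ∈ R_s and g(u,w) = j, is at most 2n(q+1) · (n − 1)^{q−1} · n^{q⁴ − (q−1)}. Equivalently, under the uniform distribution on colorings, the probability that the edge (u, z) fails one of these witness conditions is at most 2n(q+1)(1 − 1/n)^{q−1}. -/
instance slopeRel.decidable {F : Type*} [Field F] [DecidableEq F] (s : Option F) (p : F × F) :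
    DecidablePred (slopeRel s p) := fun r =>
  match s with
  | some s => decidable_of_iff (p.1 ≠ r.1 ∧ r.2 - p.2 = s * (r.1 - p.1)) (by simp [slopeRel])
  | none => decidable_of_iff (p.1 = r.1 ∧ p.2 ≠ r.2) (by simp [slopeRel])

/-- The number of functions `ι → α` avoiding the value `a` on every coordinate in `T`. -/
lemma card_avoid {ι α : Type*} [Fintype ι] [DecidableEq ι] [Fintype α] [DecidableEq α]
    (T : Finset ι) (a : α) :
    (Finset.univ.filter fun g : ι → α => ∀ i ∈ T, g i ≠ a).card
      = (Fintype.card α - 1) ^ T.card * (Fintype.card α) ^ (Fintype.card ι - T.card) := by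
  have h1 : (Finset.univ.filter fun g : ι → α => ∀ i ∈ T, g i ≠ a)
      = Fintype.piFinset (fun i => if i ∈ T then Finset.univ.erase a else Finset.univ) := by
    ext g
    simp only [Finset.mem_filter, Finset.mem_univ, true_and, Fintype.mem_piFinset]
    constructor
    · intro h i
      by_cases hi : i ∈ T <;> simp [hi, h]
    · intro h i hi
      have := h i
      simp [hi] at this
      exact this
  rw [h1, Fintype.card_piFinset, ← Finset.prod_mul_prod_compl T]
  have e1 : ∀ i ∈ T, (if i ∈ T then Finset.univ.erase a else Finset.univ).card
      = Fintype.card α - 1 := by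
    intro i hi; simp [hi, Finset.card_erase_of_mem]
  have e2 : ∀ i ∈ Tᶜ, (if i ∈ T then Finset.univ.erase a else Finset.univ).card
      = Fintype.card α := by
    intro i hi; simp at hi; simp [hi]
  rw [Finset.prod_congr rfl e1, Finset.prod_congr rfl e2, Finset.prod_const, Finset.prod_const,
    Finset.card_compl]

/-- A slope-`s` line through `u` (with `u` removed) has exactly `q - 1` points. -/
lemma line_card {F : Type*} [Field F] [Fintype F] [DecidableEq F] (s : Option F) (u : F × F) :
    (Finset.univ.filter fun w : F × F => slopeRel s u w).card = Fintype.card F - 1 := by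
  cases s with
  | none =>
    have h : (Finset.univ.filter fun w : F × F => slopeRel none u w)
        = (Finset.univ.erase u.2).image (fun y => (u.1, y)) := by
      ext w
      simp only [Finset.mem_filter, Finset.mem_univ, true_and, Finset.mem_image,
        Finset.mem_erase]
      simp only [slopeRel]
      constructor
      · rintro ⟨h1, h2⟩; exact ⟨w.2, ⟨fun h => h2 h.symm, trivial⟩, Prod.ext h1 rfl⟩
      · rintro ⟨y, ⟨hy, -⟩, rfl⟩; exact ⟨rfl, fun h => hy h.symm⟩
    rw [h, Finset.card_image_of_injective _ (fun a b hab => (Prod.mk.injEq _ _ _ _).mp hab |>.2),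
      Finset.card_erase_of_mem (Finset.mem_univ _), Finset.card_univ]
  | some s0 =>
    have h : (Finset.univ.filter fun w : F × F => slopeRel (some s0) u w)
        = (Finset.univ.erase u.1).image (fun x => (x, u.2 + s0 * (x - u.1))) := by
      ext w
      simp only [Finset.mem_filter, Finset.mem_univ, true_and, Finset.mem_image,
        Finset.mem_erase]
      simp only [slopeRel]
      constructor
      · rintro ⟨h1, h2⟩
        refine ⟨w.1, ⟨fun h => h1 h.symm, trivial⟩, ?_⟩
        have : w.2 = u.2 + s0 * (w.1 - u.1) := by linear_combination h2
        exact Prod.ext rfl this.symm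
      · rintro ⟨x, ⟨hx, -⟩, rfl⟩; exact ⟨fun h => hx h.symm, by ring⟩
    rw [h, Finset.card_image_of_injective _ (fun a b hab => (Prod.mk.injEq _ _ _ _).mp hab |>.1),
      Finset.card_erase_of_mem (Finset.mem_univ _), Finset.card_univ]

/-- Fix `u, z ∈ D` (where `D = F × F`, `|F| = q`).  The number of colorings
`g : D × D → Fin n` for which there exist a slope `s ∈ F ∪ {∞}` and a color `j` such
that either no `w` satisfies `(u, w) ∈ R_s` and `g (w, z) = j`, or no `w` satisfies
`(z, w) ∈ R_s` and `g (u, w) = j`, is at most `2n(q+1) * (n − 1)^(q−1) * n^(q⁴ − (q−1))`;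
equivalently, under the uniform distribution the probability that the edge `(u, z)`
fails one of these witness conditions is at most `2n(q+1)(1 − 1/n)^(q−1)`. -/
theorem stmt7 (q : ℕ) (hq : IsPrimePow q) (F : Type*) [Field F] [Fintype F]
    (hcard : Fintype.card F = q) (n : ℕ) (u z : F × F) :
    {g : (F × F) × (F × F) → Fin n |
        ∃ (s : Option F) (j : Fin n),
          (¬ ∃ w : F × F, slopeRel s u w ∧ g (w, z) = j) ∨
          (¬ ∃ w : F × F, slopeRel s z w ∧ g (u, w) = j)}.ncard ≤
      2 * n * (q + 1) * ((n - 1) ^ (q - 1) * n ^ (q ^ 4 - (q - 1))) := by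
  classical
  set B : ℕ := (n - 1) ^ (q - 1) * n ^ (q ^ 4 - (q - 1)) with hB
  set T1 : Option F → Finset ((F × F) × (F × F)) :=
    fun s => (Finset.univ.filter fun w => slopeRel s u w).image (fun w => (w, z)) with hT1
  set T2 : Option F → Finset ((F × F) × (F × F)) :=
    fun s => (Finset.univ.filter fun w => slopeRel s z w).image (fun w => (u, w)) with hT2
  have hT1card : ∀ s, (T1 s).card = q - 1 := by
    intro s
    rw [hT1]
    rw [Finset.card_image_of_injective _
      (fun a b hab => ((Prod.mk.injEq _ _ _ _).mp hab).1), line_card, hcard]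
  have hT2card : ∀ s, (T2 s).card = q - 1 := by
    intro s
    rw [hT2]
    rw [Finset.card_image_of_injective _
      (fun a b hab => ((Prod.mk.injEq _ _ _ _).mp hab).2), line_card, hcard]
  have hI : Fintype.card ((F × F) × (F × F)) = q ^ 4 := by
    simp only [Fintype.card_prod, hcard]; ring
  have key : ∀ (T : Finset ((F × F) × (F × F))), T.card = q - 1 → ∀ j : Fin n,
      (Finset.univ.filter fun g : (F × F) × (F × F) → Fin n => ∀ i ∈ T, g i ≠ j).card = B := by
    intro T hT j
    rw [card_avoid T j, Fintype.card_fin, hI, hT, hB]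
  -- rewrite the set as a finset
  have hset : {g : (F × F) × (F × F) → Fin n |
        ∃ (s : Option F) (j : Fin n),
          (¬ ∃ w : F × F, slopeRel s u w ∧ g (w, z) = j) ∨
          (¬ ∃ w : F × F, slopeRel s z w ∧ g (u, w) = j)}
      = ↑(Finset.univ.filter fun g : (F × F) × (F × F) → Fin n =>
          ∃ (s : Option F) (j : Fin n),
          (¬ ∃ w : F × F, slopeRel s u w ∧ g (w, z) = j) ∨
          (¬ ∃ w : F × F, slopeRel s z w ∧ g (u, w) = j)) := by
    ext g; simp
  rw [hset, Set.ncard_coe_finset]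
  have hsub : (Finset.univ.filter fun g : (F × F) × (F × F) → Fin n =>
          ∃ (s : Option F) (j : Fin n),
          (¬ ∃ w : F × F, slopeRel s u w ∧ g (w, z) = j) ∨
          (¬ ∃ w : F × F, slopeRel s z w ∧ g (u, w) = j))
      ⊆ (Finset.univ : Finset (Option F × Fin n)).biUnion (fun p =>
          (Finset.univ.filter fun g : (F × F) × (F × F) → Fin n => ∀ i ∈ T1 p.1, g i ≠ p.2)
          ∪ (Finset.univ.filter fun g : (F × F) × (F × F) → Fin n =>
              ∀ i ∈ T2 p.1, g i ≠ p.2)) := by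
    intro g hg
    simp only [Finset.mem_filter, Finset.mem_univ, true_and] at hg
    obtain ⟨s, j, hcase⟩ := hg
    simp only [Finset.mem_biUnion, Finset.mem_univ, Finset.mem_union, Finset.mem_filter, true_and]
    refine ⟨(s, j), ?_⟩
    rcases hcase with h | h
    · left
      intro i hi
      rw [hT1] at hi
      simp only [Finset.mem_image, Finset.mem_filter, Finset.mem_univ, true_and] at hi
      obtain ⟨w, hw, rfl⟩ := hi
      exact fun hgi => h ⟨w, hw, hgi⟩
    · right
      intro i hi
      rw [hT2] at hi
      simp only [Finset.mem_image, Finset.mem_filter, Finset.mem_univ, true_and] at hi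
      obtain ⟨w, hw, rfl⟩ := hi
      exact fun hgi => h ⟨w, hw, hgi⟩
  calc (Finset.univ.filter fun g : (F × F) × (F × F) → Fin n =>
          ∃ (s : Option F) (j : Fin n),
          (¬ ∃ w : F × F, slopeRel s u w ∧ g (w, z) = j) ∨
          (¬ ∃ w : F × F, slopeRel s z w ∧ g (u, w) = j)).card
      ≤ ((Finset.univ : Finset (Option F × Fin n)).biUnion (fun p =>
          (Finset.univ.filter fun g : (F × F) × (F × F) → Fin n => ∀ i ∈ T1 p.1, g i ≠ p.2)
          ∪ (Finset.univ.filter fun g : (F × F) × (F × F) → Fin n =>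
              ∀ i ∈ T2 p.1, g i ≠ p.2))).card := Finset.card_le_card hsub
    _ ≤ ∑ p : Option F × Fin n,
          ((Finset.univ.filter fun g : (F × F) × (F × F) → Fin n => ∀ i ∈ T1 p.1, g i ≠ p.2)
          ∪ (Finset.univ.filter fun g : (F × F) × (F × F) → Fin n =>
              ∀ i ∈ T2 p.1, g i ≠ p.2)).card := Finset.card_biUnion_le
    _ ≤ ∑ p : Option F × Fin n, (B + B) := by
        apply Finset.sum_le_sum
        intro p _
        calc _ ≤ (Finset.univ.filter fun g : (F × F) × (F × F) → Fin n =>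
                    ∀ i ∈ T1 p.1, g i ≠ p.2).card
                + (Finset.univ.filter fun g : (F × F) × (F × F) → Fin n =>
                    ∀ i ∈ T2 p.1, g i ≠ p.2).card := Finset.card_union_le _ _
          _ = B + B := by rw [key _ (hT1card p.1) p.2, key _ (hT2card p.1) p.2]
    _ = (q + 1) * n * (B + B) := by
        rw [Finset.sum_const, Finset.card_univ, Fintype.card_prod, Fintype.card_option,
          Fintype.card_fin, hcard, smul_eq_mul]
    _ = 2 * n * (q + 1) * B := by ring
end

section
/- (Union-bound existence of a good coloring.) Let q be a prime power and n ≥ 1. If 2·(q² choose 2)·n²·(1 − 1/n²)^{q²} + 2·q⁴·n·(q+1)·(1 − 1/n)^{q−1} < 1, then there exists a good coloring f : D × D → Fin n. -/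
open Function
open scoped Classical

/-- A coloring `f : D × D → Fin n` (of the edges between `D = F × F` and a disjoint
copy of `D`) is good if it satisfies the witness conditions (1a), (1b), (2a), (2b)
needed to turn the standard representation of `𝔏(q,1)` into one of `𝔏(q,n)`. -/
def IsGood {F : Type*} [Field F] {n : ℕ} (f : (F × F) × (F × F) → Fin n) : Prop :=
  (∀ u v : F × F, u ≠ v → ∀ i j : Fin n, ∃ z : F × F, f (u, z) = i ∧ f (v, z) = j) ∧
  (∀ u v : F × F, u ≠ v → ∀ i j : Fin n, ∃ z : F × F, f (z, u) = i ∧ f (z, v) = j) ∧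
  (∀ u z : F × F, ∀ s : Option F, ∀ j : Fin n,
    ∃ w : F × F, slopeRel s u w ∧ f (w, z) = j) ∧
  (∀ u z : F × F, ∀ s : Option F, ∀ j : Fin n,
    ∃ w : F × F, slopeRel s z w ∧ f (u, w) = j)

lemma count_comp {ι β α : Type*} [Fintype ι] [Fintype β] [Fintype α]
    (κ : β → ι) (hκ : Function.Injective κ) (Q : (β → α) → Prop) :
    Nat.card {f : ι → α // Q (f ∘ κ)}
      = Nat.card {g : β → α // Q g} * Nat.card α ^ (Nat.card ι - Nat.card β) := by
  simp only [Nat.card_eq_fintype_card]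
  let e : (ι → α) ≃ (β → α) × ({i : ι // i ∉ Set.range κ} → α) :=
  { toFun := fun f => (f ∘ κ, fun i => f i.1)
    invFun := fun p i => if h : ∃ b, κ b = i then p.1 h.choose
      else p.2 ⟨i, by simpa [Set.range, Set.mem_setOf_eq] using h⟩
    left_inv := by
      intro f; funext i
      by_cases h : ∃ b, κ b = i
      · simp only [h, dif_pos]
        have hs := h.choose_spec
        simp [comp_apply, hs]
      · simp [h]
    right_inv := by
      rintro ⟨g, r⟩
      refine Prod.ext ?_ ?_
      · funext b
        have h : ∃ b', κ b' = κ b := ⟨b, rfl⟩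
        simp only [comp_apply, h, dif_pos]
        congr 1
        exact hκ h.choose_spec
      · funext i
        have h : ¬ ∃ b', κ b' = i.1 := by
          intro hc; exact i.2 ⟨hc.choose, hc.choose_spec⟩
        simp only [h, dif_neg, not_false_iff] }
  have e1 : {f : ι → α // Q (f ∘ κ)} ≃
      {p : (β → α) × ({i : ι // i ∉ Set.range κ} → α) // Q p.1} :=
    e.subtypeEquiv (fun f => Iff.rfl)
  have e2 : {p : (β → α) × ({i : ι // i ∉ Set.range κ} → α) // Q p.1} ≃
      {g : β → α // Q g} × ({i : ι // i ∉ Set.range κ} → α) :=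
  { toFun := fun p => (⟨p.1.1, p.2⟩, p.1.2)
    invFun := fun x => ⟨(x.1.1, x.2), x.1.2⟩
    left_inv := by rintro ⟨⟨a, b⟩, hp⟩; rfl
    right_inv := by rintro ⟨⟨a, ha⟩, b⟩; rfl }
  rw [Fintype.card_congr (e1.trans e2), Fintype.card_prod, Fintype.card_fun]
  congr 2
  rw [Fintype.card_subtype_compl]
  congr 1
  exact (Fintype.card_congr (Equiv.ofInjective κ hκ)).symm

lemma count_avoid {β γ : Type*} [Fintype β] [Fintype γ] (c : β → γ) :
    Nat.card {g : β → γ // ∀ b, g b ≠ c b} = (Nat.card γ - 1) ^ Nat.card β := by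
  simp only [Nat.card_eq_fintype_card]
  rw [Fintype.card_congr (Equiv.subtypePiEquivPi (p := fun b x => x ≠ c b)), Fintype.card_pi]
  have h : ∀ b : β, Fintype.card {x : γ // x ≠ c b} = Fintype.card γ - 1 := by
    intro b
    rw [Fintype.card_subtype_compl, Fintype.card_subtype_eq]
  simp only [h, Finset.prod_const, Finset.card_univ]

lemma union_bound {Ω I : Type*} [Fintype Ω] [Fintype I] (P : Ω → Prop) (E : I → Ω → Prop)
    (h : ∀ x, P x → ∃ t, E t x) :
    Nat.card {x // P x} ≤ ∑ t : I, Nat.card {x // E t x} := by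
  simp only [Nat.card_eq_fintype_card]
  rw [Fintype.card_subtype]
  have hsub : (Finset.univ.filter P) ⊆ Finset.univ.biUnion fun t => Finset.univ.filter (E t) := by
    intro x hx
    simp only [Finset.mem_filter, Finset.mem_univ, true_and] at hx
    obtain ⟨t, ht⟩ := h x hx
    simp only [Finset.mem_biUnion, Finset.mem_filter, Finset.mem_univ, true_and]
    exact ⟨t, ht⟩
  calc (Finset.univ.filter P).card ≤ _ := Finset.card_le_card hsub
    _ ≤ ∑ t : I, (Finset.univ.filter (E t)).card := Finset.card_biUnion_le
    _ = _ := by simp [Fintype.card_subtype]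

lemma card_ne_single {γ : Type*} [Fintype γ] (a : γ) :
    Nat.card {x : γ // x ≠ a} = Nat.card γ - 1 := by
  simp only [Nat.card_eq_fintype_card]
  rw [Fintype.card_subtype_compl, Fintype.card_subtype_eq]

lemma card_slope {F : Type*} [Field F] [Fintype F] (s : Option F) (u : F × F) :
    Nat.card {w : F × F // slopeRel s u w} = Nat.card F - 1 := by
  cases s with
  | none =>
    have e : {w : F × F // slopeRel none u w} ≃ {t : F // t ≠ u.2} :=
      { toFun := fun w => ⟨w.1.2, fun h => w.2.2 h.symm⟩
        invFun := fun t => ⟨(u.1, t.1), ⟨rfl, Ne.symm t.2⟩⟩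
        left_inv := by rintro ⟨⟨a, b⟩, hw⟩; exact Subtype.ext (Prod.ext hw.1 rfl)
        right_inv := fun t => Subtype.ext rfl }
    rw [Nat.card_congr e, card_ne_single]
  | some s =>
    have e : {w : F × F // slopeRel (some s) u w} ≃ {t : F // t ≠ u.1} :=
      { toFun := fun w => ⟨w.1.1, fun h => w.2.1 h.symm⟩
        invFun := fun t => ⟨(t.1, u.2 + s * (t.1 - u.1)), ⟨Ne.symm t.2, by ring⟩⟩
        left_inv := by
          rintro ⟨⟨a, b⟩, hw⟩
          refine Subtype.ext (Prod.ext rfl ?_)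
          have h2 : b - u.2 = s * (a - u.1) := hw.2
          dsimp only
          linear_combination -h2
        right_inv := fun t => Subtype.ext rfl }
    rw [Nat.card_congr e, card_ne_single]

lemma card_lt_pairs {α : Type*} [Fintype α] [LinearOrder α] :
    Nat.card {p : α × α // p.1 < p.2} = (Nat.card α).choose 2 := by
  simp only [Nat.card_eq_fintype_card]
  set m := Fintype.card α with hm
  have hA : Fintype.card {p : α × α // p.1 < p.2}
      = (Finset.univ.filter fun p : α × α => p.1 < p.2).card := by
    rw [Fintype.card_subtype]
  set A := Finset.univ.filter fun p : α × α => p.1 < p.2 with hAdef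
  set B := Finset.univ.filter fun p : α × α => p.2 < p.1 with hBdef
  have hcardAB : A.card = B.card := by
    apply Finset.card_bij (fun p _ => Prod.swap p)
    · intro p hp
      simp only [hAdef, hBdef, Finset.mem_filter, Finset.mem_univ, true_and] at *
      exact hp
    · intro p _ r _ hpr
      exact Prod.swap_injective hpr
    · intro p hp
      refine ⟨p.swap, ?_, by simp⟩
      simp only [hAdef, hBdef, Finset.mem_filter, Finset.mem_univ, true_and] at *
      exact hp
  have hunion : (Finset.univ : Finset α).offDiag = A ∪ B := by
    ext p
    simp only [Finset.mem_offDiag, Finset.mem_union, hAdef, hBdef, Finset.mem_filter,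
      Finset.mem_univ, true_and]
    constructor
    · intro hne
      exact lt_or_gt_of_ne hne
    · rintro (h | h)
      exacts [ne_of_lt h, (ne_of_lt h).symm]
  have hdisj : Disjoint A B := by
    rw [Finset.disjoint_left]
    intro p hp hq
    simp only [hAdef, hBdef, Finset.mem_filter, Finset.mem_univ, true_and] at hp hq
    exact absurd hq (not_lt_of_gt hp)
  have hoff := Finset.offDiag_card (Finset.univ : Finset α)
  rw [hunion, Finset.card_union_of_disjoint hdisj, Finset.card_univ, ← hm, ← hcardAB] at hoff
  have hmm : m * m - m = m * (m - 1) := by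
    cases m with
    | zero => rfl
    | succ k => simp [Nat.succ_sub_one, Nat.mul_sub, Nat.mul_succ]
  rw [hA, Nat.choose_two_right]
  omega

lemma countA {F : Type*} [Field F] [Fintype F] {n : ℕ} {u v : F × F} (huv : u ≠ v) (i j : Fin n) :
    Nat.card {f : (F × F) × (F × F) → Fin n // ∀ z, f (u, z) = i → f (v, z) ≠ j}
      = (n ^ 2 - 1) ^ Nat.card (F × F)
        * n ^ (Nat.card ((F × F) × (F × F)) - 2 * Nat.card (F × F)) := by
  let κ : (F × F) × Bool → (F × F) × (F × F) := fun p => (cond p.2 u v, p.1)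
  have hκ : Function.Injective κ := by
    rintro ⟨z1, b1⟩ ⟨z2, b2⟩ hp
    have h1 : cond b1 u v = cond b2 u v := congrArg Prod.fst hp
    have h2 : z1 = z2 := congrArg Prod.snd hp
    cases b1 <;> cases b2 <;> simp_all
  let Q : ((F × F) × Bool → Fin n) → Prop := fun g => ∀ z, g (z, true) = i → g (z, false) ≠ j
  have e0 : {f : (F × F) × (F × F) → Fin n // ∀ z, f (u, z) = i → f (v, z) ≠ j}
      ≃ {f : (F × F) × (F × F) → Fin n // Q (f ∘ κ)} :=
    Equiv.subtypeEquivRight (fun f => Iff.rfl)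
  rw [Nat.card_congr e0, count_comp κ hκ Q]
  have e1 : {g : (F × F) × Bool → Fin n // Q g} ≃
      {h : (F × F) → Bool → Fin n // ∀ z, h z ≠ fun b => cond b i j} := by
    refine (Equiv.curry (F × F) Bool (Fin n)).subtypeEquiv fun g => ?_
    refine forall_congr' fun z => ?_
    rw [← not_and]
    exact not_congr ⟨fun hand => funext fun b => by cases b <;> [exact hand.2; exact hand.1],
      fun he => ⟨congrFun he true, congrFun he false⟩⟩
  rw [Nat.card_congr e1, count_avoid]
  congr 2
  · rw [Nat.card_fun]
    simp [Nat.card_eq_fintype_card, sq]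
  · simp [Nat.card_eq_fintype_card]
  · rw [Nat.card_prod]
    simp [Nat.card_eq_fintype_card, mul_comm]

lemma countB {F : Type*} [Field F] [Fintype F] {n : ℕ} {u v : F × F} (huv : u ≠ v) (i j : Fin n) :
    Nat.card {f : (F × F) × (F × F) → Fin n // ∀ z, f (z, u) = i → f (z, v) ≠ j}
      = (n ^ 2 - 1) ^ Nat.card (F × F)
        * n ^ (Nat.card ((F × F) × (F × F)) - 2 * Nat.card (F × F)) := by
  let κ : (F × F) × Bool → (F × F) × (F × F) := fun p => (p.1, cond p.2 u v)
  have hκ : Function.Injective κ := by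
    rintro ⟨z1, b1⟩ ⟨z2, b2⟩ hp
    have h1 : cond b1 u v = cond b2 u v := congrArg Prod.snd hp
    have h2 : z1 = z2 := congrArg Prod.fst hp
    cases b1 <;> cases b2 <;> simp_all
  let Q : ((F × F) × Bool → Fin n) → Prop := fun g => ∀ z, g (z, true) = i → g (z, false) ≠ j
  have e0 : {f : (F × F) × (F × F) → Fin n // ∀ z, f (z, u) = i → f (z, v) ≠ j}
      ≃ {f : (F × F) × (F × F) → Fin n // Q (f ∘ κ)} :=
    Equiv.subtypeEquivRight (fun f => Iff.rfl)
  rw [Nat.card_congr e0, count_comp κ hκ Q]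
  have e1 : {g : (F × F) × Bool → Fin n // Q g} ≃
      {h : (F × F) → Bool → Fin n // ∀ z, h z ≠ fun b => cond b i j} := by
    refine (Equiv.curry (F × F) Bool (Fin n)).subtypeEquiv fun g => ?_
    refine forall_congr' fun z => ?_
    rw [← not_and]
    exact not_congr ⟨fun hand => funext fun b => by cases b <;> [exact hand.2; exact hand.1],
      fun he => ⟨congrFun he true, congrFun he false⟩⟩
  rw [Nat.card_congr e1, count_avoid]
  congr 2
  · rw [Nat.card_fun]
    simp [Nat.card_eq_fintype_card, sq]
  · simp [Nat.card_eq_fintype_card]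
  · rw [Nat.card_prod]
    simp [Nat.card_eq_fintype_card, mul_comm]

lemma countC {F : Type*} [Field F] [Fintype F] {n : ℕ} (u z : F × F) (s : Option F) (j : Fin n) :
    Nat.card {f : (F × F) × (F × F) → Fin n // ∀ w, slopeRel s u w → f (w, z) ≠ j}
      = (n - 1) ^ (Nat.card F - 1)
        * n ^ (Nat.card ((F × F) × (F × F)) - (Nat.card F - 1)) := by
  let κ : {w : F × F // slopeRel s u w} → (F × F) × (F × F) := fun w => (w.1, z)
  have hκ : Function.Injective κ := fun a b hab => Subtype.ext (congrArg Prod.fst hab)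
  let Q : ({w : F × F // slopeRel s u w} → Fin n) → Prop :=
    fun g => ∀ w, g w ≠ (fun _ : {w : F × F // slopeRel s u w} => j) w
  have e0 : {f : (F × F) × (F × F) → Fin n // ∀ w, slopeRel s u w → f (w, z) ≠ j}
      ≃ {f : (F × F) × (F × F) → Fin n // Q (f ∘ κ)} :=
    Equiv.subtypeEquivRight fun f =>
      ⟨fun hf w => hf w.1 w.2, fun hf w hw => hf ⟨w, hw⟩⟩
  rw [Nat.card_congr e0, count_comp κ hκ Q, count_avoid, card_slope]
  simp [Nat.card_eq_fintype_card]

lemma countD {F : Type*} [Field F] [Fintype F] {n : ℕ} (u z : F × F) (s : Option F) (j : Fin n) :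
    Nat.card {f : (F × F) × (F × F) → Fin n // ∀ w, slopeRel s z w → f (u, w) ≠ j}
      = (n - 1) ^ (Nat.card F - 1)
        * n ^ (Nat.card ((F × F) × (F × F)) - (Nat.card F - 1)) := by
  let κ : {w : F × F // slopeRel s z w} → (F × F) × (F × F) := fun w => (u, w.1)
  have hκ : Function.Injective κ := fun a b hab => Subtype.ext (congrArg Prod.snd hab)
  let Q : ({w : F × F // slopeRel s z w} → Fin n) → Prop :=
    fun g => ∀ w, g w ≠ (fun _ : {w : F × F // slopeRel s z w} => j) w
  have e0 : {f : (F × F) × (F × F) → Fin n // ∀ w, slopeRel s z w → f (u, w) ≠ j}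
      ≃ {f : (F × F) × (F × F) → Fin n // Q (f ∘ κ)} :=
    Equiv.subtypeEquivRight fun f =>
      ⟨fun hf w => hf w.1 w.2, fun hf w hw => hf ⟨w, hw⟩⟩
  rw [Nat.card_congr e0, count_comp κ hκ Q, count_avoid, card_slope]
  simp [Nat.card_eq_fintype_card]

/-- Union-bound existence of a good coloring: if
`2 C(q²,2) n² (1 − 1/n²)^(q²) + 2 q⁴ n (q+1) (1 − 1/n)^(q−1) < 1`
then a good coloring `f : D × D → Fin n` exists. -/
theorem stmt8 (q n : ℕ) (hq : IsPrimePow q) (hn : 1 ≤ n)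
    (h : 2 * (Nat.choose (q ^ 2) 2 : ℝ) * n ^ 2 * (1 - 1 / (n : ℝ) ^ 2) ^ (q ^ 2)
        + 2 * (q : ℝ) ^ 4 * n * (q + 1) * (1 - 1 / (n : ℝ)) ^ (q - 1) < 1)
    (F : Type*) [Field F] [Fintype F] (hcard : Fintype.card F = q) :
    ∃ f : (F × F) × (F × F) → Fin n, IsGood f := by
  classical
  by_contra hcon
  push_neg at hcon
  letI : LinearOrder (F × F) :=
    LinearOrder.lift' (Fintype.equivFin (F × F)) (Fintype.equivFin (F × F)).injective
  have hq2 : 2 ≤ q := hq.two_le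
  have hcardF : Nat.card F = q := by rw [Nat.card_eq_fintype_card, hcard]
  have hD : Nat.card (F × F) = q ^ 2 := by rw [Nat.card_prod, hcardF]; ring
  have hι : Nat.card ((F × F) × (F × F)) = q ^ 4 := by rw [Nat.card_prod, hD]; ring
  have hFin : Nat.card (Fin n) = n := by simp [Nat.card_eq_fintype_card]
  -- the events
  let E : (({p : (F × F) × (F × F) // p.1 < p.2} × Fin n × Fin n)
        ⊕ (({p : (F × F) × (F × F) // p.1 < p.2} × Fin n × Fin n)
        ⊕ (((F × F) × (F × F) × Option F × Fin n)
        ⊕ ((F × F) × (F × F) × Option F × Fin n))))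
      → ((F × F) × (F × F) → Fin n) → Prop := fun t f =>
    match t with
    | .inl (p, i, j) => ∀ z, f (p.1.1, z) = i → f (p.1.2, z) ≠ j
    | .inr (.inl (p, i, j)) => ∀ z, f (z, p.1.1) = i → f (z, p.1.2) ≠ j
    | .inr (.inr (.inl (u, z, s, j))) => ∀ w, slopeRel s u w → f (w, z) ≠ j
    | .inr (.inr (.inr (u, z, s, j))) => ∀ w, slopeRel s z w → f (u, w) ≠ j
  have hcover : ∀ f, (fun f => ¬ IsGood f) f → ∃ t, E t f := by
    intro f hf
    by_cases hA : ∀ u v : F × F, u ≠ v → ∀ i j : Fin n, ∃ z, f (u, z) = i ∧ f (v, z) = j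
    · by_cases hB : ∀ u v : F × F, u ≠ v → ∀ i j : Fin n, ∃ z, f (z, u) = i ∧ f (z, v) = j
      · by_cases hC : ∀ (u z : F × F) (s : Option F) (j : Fin n),
            ∃ w, slopeRel s u w ∧ f (w, z) = j
        · by_cases hD' : ∀ (u z : F × F) (s : Option F) (j : Fin n),
              ∃ w, slopeRel s z w ∧ f (u, w) = j
          · exact absurd ⟨hA, hB, hC, hD'⟩ hf
          · push_neg at hD'
            obtain ⟨u, z, s, j, hw⟩ := hD'
            exact ⟨.inr (.inr (.inr (u, z, s, j))), hw⟩
        · push_neg at hC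
          obtain ⟨u, z, s, j, hw⟩ := hC
          exact ⟨.inr (.inr (.inl (u, z, s, j))), hw⟩
      · push_neg at hB
        obtain ⟨u, v, huv, i, j, hz⟩ := hB
        rcases lt_or_gt_of_ne huv with hlt | hgt
        · exact ⟨.inr (.inl (⟨(u, v), hlt⟩, i, j)), hz⟩
        · exact ⟨.inr (.inl (⟨(v, u), hgt⟩, j, i)), fun z h1 h2 => hz z h2 h1⟩
    · push_neg at hA
      obtain ⟨u, v, huv, i, j, hz⟩ := hA
      rcases lt_or_gt_of_ne huv with hlt | hgt
      · exact ⟨.inl (⟨(u, v), hlt⟩, i, j), hz⟩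
      · exact ⟨.inl (⟨(v, u), hgt⟩, j, i), fun z h1 h2 => hz z h2 h1⟩
  have hUB := union_bound (fun f => ¬ IsGood f) E hcover
  rw [Fintype.sum_sum_type, Fintype.sum_sum_type, Fintype.sum_sum_type] at hUB
  -- evaluate the four sums
  have e1 : ∀ t : {p : (F × F) × (F × F) // p.1 < p.2} × Fin n × Fin n,
      Nat.card {f : (F × F) × (F × F) → Fin n // E (.inl t) f}
        = (n ^ 2 - 1) ^ (q ^ 2) * n ^ (q ^ 4 - 2 * q ^ 2) := by
    rintro ⟨⟨⟨u, v⟩, hlt⟩, i, j⟩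
    have hres := countA (n := n) (ne_of_lt hlt) i j
    rw [hD, hι] at hres
    exact hres
  have e2 : ∀ t : {p : (F × F) × (F × F) // p.1 < p.2} × Fin n × Fin n,
      Nat.card {f : (F × F) × (F × F) → Fin n // E (.inr (.inl t)) f}
        = (n ^ 2 - 1) ^ (q ^ 2) * n ^ (q ^ 4 - 2 * q ^ 2) := by
    rintro ⟨⟨⟨u, v⟩, hlt⟩, i, j⟩
    have hres := countB (n := n) (ne_of_lt hlt) i j
    rw [hD, hι] at hres
    exact hres
  have e3 : ∀ t : (F × F) × (F × F) × Option F × Fin n,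
      Nat.card {f : (F × F) × (F × F) → Fin n // E (.inr (.inr (.inl t))) f}
        = (n - 1) ^ (q - 1) * n ^ (q ^ 4 - (q - 1)) := by
    rintro ⟨u, z, s, j⟩
    have hres := countC (n := n) u z s j
    rw [hcardF, hι] at hres
    exact hres
  have e4 : ∀ t : (F × F) × (F × F) × Option F × Fin n,
      Nat.card {f : (F × F) × (F × F) → Fin n // E (.inr (.inr (.inr t))) f}
        = (n - 1) ^ (q - 1) * n ^ (q ^ 4 - (q - 1)) := by
    rintro ⟨u, z, s, j⟩
    have hres := countD (n := n) u z s j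
    rw [hcardF, hι] at hres
    exact hres
  have hI1 : Fintype.card ({p : (F × F) × (F × F) // p.1 < p.2} × Fin n × Fin n)
      = (q ^ 2).choose 2 * (n * n) := by
    rw [Fintype.card_prod, Fintype.card_prod, Fintype.card_fin,
      ← Nat.card_eq_fintype_card, card_lt_pairs, hD]
  have hI2 : Fintype.card ((F × F) × (F × F) × Option F × Fin n)
      = q ^ 2 * (q ^ 2 * ((q + 1) * n)) := by
    simp only [Fintype.card_prod, Fintype.card_option, Fintype.card_fin, hcard]
    ring
  rw [Finset.sum_congr rfl (fun t _ => e1 t), Finset.sum_congr rfl (fun t _ => e2 t),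
    Finset.sum_congr rfl (fun t _ => e3 t), Finset.sum_congr rfl (fun t _ => e4 t)] at hUB
  simp only [Finset.sum_const, Finset.card_univ, smul_eq_mul] at hUB
  rw [hI1, hI2] at hUB
  have hall : Nat.card {f : (F × F) × (F × F) → Fin n // ¬ IsGood f} = n ^ (q ^ 4) := by
    rw [Nat.card_congr (Equiv.subtypeUnivEquiv hcon), Nat.card_fun, hFin, hι]
  rw [hall] at hUB
  set a := (n ^ 2 - 1) ^ (q ^ 2) * n ^ (q ^ 4 - 2 * q ^ 2) with ha
  set b := (n - 1) ^ (q - 1) * n ^ (q ^ 4 - (q - 1)) with hb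
  have hxR : (1 : ℝ) ≤ (n : ℝ) := by exact_mod_cast hn
  have hx0 : (0 : ℝ) < (n : ℝ) := by linarith
  have hq2sq : 2 ≤ q ^ 2 := by
    have h4 : 2 ^ 2 ≤ q ^ 2 := Nat.pow_le_pow_left hq2 2
    omega
  have h2q : 2 * q ^ 2 ≤ q ^ 4 := by
    calc 2 * q ^ 2 ≤ q ^ 2 * q ^ 2 := Nat.mul_le_mul_right _ hq2sq
      _ = q ^ 4 := by ring
  have hq4 : q - 1 ≤ q ^ 4 := le_trans (Nat.sub_le q 1) (Nat.le_self_pow (by norm_num) q)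
  have hn2 : (1 : ℕ) ≤ n ^ 2 := Nat.one_le_pow _ _ hn
  have key1 : ((a : ℕ) : ℝ) = (1 - 1 / (n : ℝ) ^ 2) ^ (q ^ 2) * (n : ℝ) ^ (q ^ 4) := by
    rw [ha]
    have hsub : ((n ^ 2 - 1 : ℕ) : ℝ) = (n : ℝ) ^ 2 - 1 := by
      rw [Nat.cast_sub hn2]; push_cast; ring
    rw [Nat.cast_mul, Nat.cast_pow, Nat.cast_pow, hsub]
    have hfrac : (1 - 1 / (n : ℝ) ^ 2) = ((n : ℝ) ^ 2 - 1) / (n : ℝ) ^ 2 := by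
      field_simp
    rw [hfrac, div_pow, ← pow_mul, div_mul_eq_mul_div, eq_div_iff (by positivity)]
    rw [mul_assoc, ← pow_add, Nat.sub_add_cancel h2q]
  have key2 : ((b : ℕ) : ℝ) = (1 - 1 / (n : ℝ)) ^ (q - 1) * (n : ℝ) ^ (q ^ 4) := by
    rw [hb]
    have hsub : ((n - 1 : ℕ) : ℝ) = (n : ℝ) - 1 := by
      rw [Nat.cast_sub hn]; push_cast; ring
    rw [Nat.cast_mul, Nat.cast_pow, Nat.cast_pow, hsub]
    have hfrac : (1 - 1 / (n : ℝ)) = ((n : ℝ) - 1) / (n : ℝ) := by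
      field_simp
    rw [hfrac, div_pow, div_mul_eq_mul_div, eq_div_iff (by positivity)]
    rw [mul_assoc, ← pow_add, Nat.sub_add_cancel hq4]
  have keyS : (((q ^ 2).choose 2 * (n * n) * a
      + ((q ^ 2).choose 2 * (n * n) * a
      + (q ^ 2 * (q ^ 2 * ((q + 1) * n)) * b
      + q ^ 2 * (q ^ 2 * ((q + 1) * n)) * b)) : ℕ) : ℝ)
      = (2 * (Nat.choose (q ^ 2) 2 : ℝ) * n ^ 2 * (1 - 1 / (n : ℝ) ^ 2) ^ (q ^ 2)
        + 2 * (q : ℝ) ^ 4 * n * (q + 1) * (1 - 1 / (n : ℝ)) ^ (q - 1)) * (n : ℝ) ^ (q ^ 4) := by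
    push_cast [key1, key2]
    ring
  have hlt : (((q ^ 2).choose 2 * (n * n) * a
      + ((q ^ 2).choose 2 * (n * n) * a
      + (q ^ 2 * (q ^ 2 * ((q + 1) * n)) * b
      + q ^ 2 * (q ^ 2 * ((q + 1) * n)) * b)) : ℕ) : ℝ) < (n : ℝ) ^ (q ^ 4) := by
    rw [keyS]
    calc (2 * (Nat.choose (q ^ 2) 2 : ℝ) * n ^ 2 * (1 - 1 / (n : ℝ) ^ 2) ^ (q ^ 2)
        + 2 * (q : ℝ) ^ 4 * n * (q + 1) * (1 - 1 / (n : ℝ)) ^ (q - 1)) * (n : ℝ) ^ (q ^ 4)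
        < 1 * (n : ℝ) ^ (q ^ 4) := mul_lt_mul_of_pos_right h (pow_pos hx0 _)
      _ = (n : ℝ) ^ (q ^ 4) := one_mul _
  have hge := Nat.cast_le (α := ℝ) |>.mpr hUB
  have hcastpow : ((n ^ q ^ 4 : ℕ) : ℝ) = (n : ℝ) ^ (q ^ 4) := by push_cast; ring
  rw [hcastpow] at hge
  exact absurd (lt_of_le_of_lt hge hlt) (lt_irrefl _)
end

section
/- (Main theorem, explicit form.) For every natural number n ≥ 18 and every prime power q with q ≥ n · (log n)³, there exists a good coloring f : D × D → Fin n. (This good coloring yields a square representation of the relation algebra 𝔏(q,n), so 𝔏(q,n) is representable.) -/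
open Finset Real

section Aux

lemma slopeRel_translate {F : Type*} [Field F] (s : Option F) (t u w : F × F) :
    slopeRel s (u + t) (w + t) ↔ slopeRel s u w := by
  cases s with
  | some s0 =>
      simp only [slopeRel, Prod.fst_add, Prod.snd_add, add_right_cancel_iff (a := t.1)]
      constructor <;> rintro ⟨h1, h2⟩ <;> refine ⟨by simpa using h1, by linear_combination h2⟩
  | none =>
      simp only [slopeRel, Prod.fst_add, Prod.snd_add]
      constructor <;> rintro ⟨h1, h2⟩ <;>
        exact ⟨by simpa using h1, by simpa using h2⟩

lemma card_slope_line {F : Type*} [Field F] [Fintype F] [DecidableEq F]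
    (u : F × F) (s : Option F) [DecidablePred (slopeRel s u)] :
    (univ.filter (fun w => slopeRel s u w)).card = Fintype.card F - 1 := by
  classical
  cases s with
  | some s0 =>
      have himg : univ.filter (fun w => slopeRel (some s0) u w)
          = (univ.erase u.1).image (fun t => (t, u.2 + s0 * (t - u.1))) := by
        ext ⟨a, b⟩
        simp only [mem_filter, mem_univ, true_and, mem_image, mem_erase]
        simp only [slopeRel]
        constructor
        · rintro ⟨h1, h2⟩
          refine ⟨a, ⟨fun h => h1 h.symm, trivial⟩, ?_⟩
            
          have : u.2 + s0 * (a - u.1) = b := by linear_combination -h2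
          simp [Prod.ext_iff, this]
        · rintro ⟨t, ⟨ht, -⟩, h⟩
          obtain ⟨rfl, rfl⟩ : t = a ∧ u.2 + s0 * (t - u.1) = b := by
            simpa [Prod.ext_iff] using h
          exact ⟨fun h => ht h.symm, by ring⟩
      rw [himg, Finset.card_image_of_injective _ (fun a b h => (Prod.ext_iff.1 h).1),
        Finset.card_erase_of_mem (mem_univ _), Finset.card_univ]
  | none =>
      have himg : univ.filter (fun w => slopeRel none u w)
          = (univ.erase u.2).image (fun t => (u.1, t)) := by
        ext ⟨a, b⟩
        simp only [mem_filter, mem_univ, true_and, mem_image, mem_erase]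
        simp only [slopeRel]
        constructor
        · rintro ⟨h1, h2⟩
          exact ⟨b, ⟨fun h => h2 h.symm, trivial⟩, by simp [Prod.ext_iff, h1]⟩
        · rintro ⟨t, ⟨ht, -⟩, h⟩
          obtain ⟨rfl, rfl⟩ : u.1 = a ∧ t = b := by simpa [Prod.ext_iff] using h
          exact ⟨rfl, fun h => ht h.symm⟩
      rw [himg, Finset.card_image_of_injective _ (fun a b h => (Prod.ext_iff.1 h).2),
        Finset.card_erase_of_mem (mem_univ _), Finset.card_univ]

lemma exists_shift_free (G : Type*) [AddCommGroup G] [Fintype G] [DecidableEq G]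
    (d : G) (hd : d ≠ 0) :
    ∃ W : Finset G, (∀ w ∈ W, w + d ∉ W) ∧ Fintype.card G ≤ 3 * W.card
      ∧ 2 * W.card ≤ Fintype.card G := by
  classical
  set 𝒞 : Finset (Finset G) :=
    univ.filter (fun W : Finset G => ∀ w ∈ W, w + d ∉ W) with h𝒞
  have hne : 𝒞.Nonempty := ⟨∅, by simp [h𝒞]⟩
  obtain ⟨W, hWmem, hWmax⟩ := Finset.exists_max_image 𝒞 Finset.card hne
  have hW : ∀ w ∈ W, w + d ∉ W := by
    simpa [h𝒞] using hWmem
  refine ⟨W, hW, ?_, ?_⟩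
  swap
  · have hdisj : Disjoint W (W.image (· + d)) := by
      rw [Finset.disjoint_left]
      intro x hx hx'
      obtain ⟨w, hw, rfl⟩ := Finset.mem_image.1 hx'
      exact hW w hw hx
    have hsub := Finset.card_le_card (Finset.subset_univ (W ∪ W.image (· + d)))
    rw [Finset.card_union_of_disjoint hdisj,
      Finset.card_image_of_injective _ (add_left_injective d), Finset.card_univ] at hsub
    omega
  have hcover : (univ : Finset G) ⊆ W ∪ W.image (· + d) ∪ W.image (fun x => x - d) := by
    intro x _
    by_cases hx : x ∈ W
    · simp [hx]
    have hbad : ¬(∀ w ∈ insert x W, w + d ∉ insert x W) := by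
      intro hgood
      have : insert x W ∈ 𝒞 := by
        rw [h𝒞, Finset.mem_filter]
        exact ⟨Finset.mem_univ _, hgood⟩
      have hle := hWmax _ this
      rw [Finset.card_insert_of_notMem hx] at hle
      omega
    push_neg at hbad
    obtain ⟨w, hw1, hw2⟩ := hbad
    rcases Finset.mem_insert.1 hw1 with rfl | hwW
    · rcases Finset.mem_insert.1 hw2 with h | h
      · exact absurd (add_eq_left.1 h) hd
      · refine Finset.mem_union.2 (Or.inr ?_)
        exact Finset.mem_image.2 ⟨w + d, h, by abel⟩
    · rcases Finset.mem_insert.1 hw2 with h | h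
      · refine Finset.mem_union.2 (Or.inl (Finset.mem_union.2 (Or.inr ?_)))
        exact Finset.mem_image.2 ⟨w, hwW, h⟩
      · exact absurd h (hW w hwW)
  have := Finset.card_le_card hcover
  calc Fintype.card G = (univ : Finset G).card := (Finset.card_univ).symm
    _ ≤ (W ∪ W.image (· + d) ∪ W.image (fun x => x - d)).card := this
    _ ≤ (W ∪ W.image (· + d)).card + (W.image (fun x => x - d)).card := Finset.card_union_le _ _
    _ ≤ W.card + (W.image (· + d)).card + (W.image (fun x => x - d)).card := by
        have := Finset.card_union_le W (W.image (· + d)); omega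
    _ ≤ W.card + W.card + W.card := by
        have h1 := Finset.card_image_le (s := W) (f := (· + d))
        have h2 := Finset.card_image_le (s := W) (f := fun x => x - d)
        omega
    _ = 3 * W.card := by ring

lemma card_avoid_s14 {D : Type*} [Fintype D] [DecidableEq D] (n : ℕ) (S : Finset D) (j : Fin n) :
    (univ.filter (fun φ : D → Fin n => ∀ w ∈ S, φ w ≠ j)).card
      = (n - 1) ^ S.card * n ^ (Fintype.card D - S.card) := by
  classical
  have hset : univ.filter (fun φ : D → Fin n => ∀ w ∈ S, φ w ≠ j)
      = Fintype.piFinset (fun w => if w ∈ S then ({j}ᶜ : Finset (Fin n)) else univ) := by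
    ext φ
    simp only [mem_filter, mem_univ, true_and, Fintype.mem_piFinset]
    constructor
    · intro h w
      by_cases hw : w ∈ S <;> simp [hw, h w]
    · intro h w hw
      have := h w
      simpa [hw] using this
  rw [hset, Fintype.card_piFinset]
  have : ∀ w : D, (if w ∈ S then ({j}ᶜ : Finset (Fin n)) else univ).card
      = if w ∈ S then n - 1 else n := by
    intro w
    split <;> simp [Finset.card_compl]
  simp_rw [this]
  rw [Finset.prod_ite, Finset.prod_const, Finset.prod_const]
  have h1 : (univ.filter (fun w : D => w ∈ S)) = S := by
    ext w; simp
  have h2 : (univ.filter (fun w : D => ¬ w ∈ S)).card = Fintype.card D - S.card := by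
    have := Finset.card_filter_add_card_filter_not (s := (univ : Finset D))
      (p := fun w : D => w ∈ S)
    rw [h1] at this
    have hcu : (univ : Finset D).card = Fintype.card D := Finset.card_univ
    omega
  rw [h1, h2]

lemma card_pair_avoid {D : Type*} [Fintype D] [DecidableEq D] [AddCommGroup D]
    (n : ℕ) (d : D) (i j : Fin n) (W : Finset D) (hW : ∀ w ∈ W, w + d ∉ W) :
    (univ.filter (fun φ : D → Fin n => ∀ w ∈ W, ¬(φ w = i ∧ φ (w + d) = j))).card
      ≤ (n * n - 1) ^ W.card * n ^ (Fintype.card D - 2 * W.card) := by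
  classical
  set W' : Finset D := W.image (· + d) with hW'
  have hdisj : Disjoint W W' := by
    rw [Finset.disjoint_left]
    intro x hx hx'
    obtain ⟨w, hw, rfl⟩ := Finset.mem_image.1 hx'
    exact hW w hw hx
  set R : Finset D := (W ∪ W')ᶜ with hR
  set T : Finset ((↥W → Fin n × Fin n) × (↥R → Fin n)) :=
    (Fintype.piFinset (fun _ : ↥W => ({(i, j)}ᶜ : Finset (Fin n × Fin n)))) ×ˢ univ with hT
  set Ψ : (D → Fin n) → (↥W → Fin n × Fin n) × (↥R → Fin n) :=
    fun φ => (fun w => (φ ↑w, φ (↑w + d)), fun x => φ ↑x) with hΨ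
  have hmaps : ∀ φ ∈ univ.filter (fun φ : D → Fin n => ∀ w ∈ W, ¬(φ w = i ∧ φ (w + d) = j)),
      Ψ φ ∈ T := by
    intro φ hφ
    rw [mem_filter] at hφ
    rw [hT, Finset.mem_product]
    refine ⟨?_, mem_univ _⟩
    rw [Fintype.mem_piFinset]
    intro w
    simp only [Finset.mem_compl, Finset.mem_singleton]
    intro hc
    rw [Prod.ext_iff] at hc
    exact hφ.2 w w.2 ⟨hc.1, hc.2⟩
  have hinj : Set.InjOn Ψ (univ.filter (fun φ : D → Fin n => ∀ w ∈ W, ¬(φ w = i ∧ φ (w + d) = j))) := by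
    intro φ _ φ' _ h
    have h1 := congrArg Prod.fst h
    have h2 := congrArg Prod.snd h
    funext x
    by_cases hx : x ∈ W
    · exact (Prod.ext_iff.1 (congrFun h1 ⟨x, hx⟩)).1
    by_cases hx2 : x - d ∈ W
    · have := (Prod.ext_iff.1 (congrFun h1 ⟨x - d, hx2⟩)).2
      simpa [hΨ, sub_add_cancel] using this
    · have hxR : x ∈ R := by
        rw [hR, Finset.mem_compl, Finset.mem_union]
        rintro (h | h)
        · exact hx h
        · obtain ⟨w, hw, rfl⟩ := Finset.mem_image.1 h
          exact hx2 (by simpa using hw)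
      exact congrFun h2 ⟨x, hxR⟩
  have hle := Finset.card_le_card_of_injOn Ψ hmaps hinj
  have hcardT : T.card = (n * n - 1) ^ W.card * n ^ (Fintype.card D - 2 * W.card) := by
    rw [hT, Finset.card_product, Fintype.card_piFinset]
    have hc1 : ({(i, j)}ᶜ : Finset (Fin n × Fin n)).card = n * n - 1 := by
      simp [Finset.card_compl]
    simp_rw [hc1]
    rw [Finset.prod_const, Finset.card_univ, Fintype.card_coe, Finset.card_univ,
      Fintype.card_fun, Fintype.card_fin, Fintype.card_coe]
    congr 2
    rw [hR, Finset.card_compl, Finset.card_union_of_disjoint hdisj,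
      Finset.card_image_of_injective _ (add_left_injective d)]
    rw [two_mul]
  rw [hcardT] at hle
  exact hle

-- small numeric facts
lemma log18_ge : (2.85 : ℝ) ≤ Real.log 18 := by
  rw [Real.le_log_iff_exp_le (by norm_num)]
  have h3 : Real.exp 3 < 20.0856 := by
    have h1 : Real.exp 1 < 2.7182818286 := Real.exp_one_lt_d9
    have h2 : Real.exp 3 = Real.exp 1 ^ (3 : ℕ) := by
      rw [← Real.exp_nat_mul]; norm_num
    rw [h2]
    have hp : Real.exp 1 ^ (3:ℕ) < 2.7182818286 ^ (3:ℕ) :=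
      pow_lt_pow_left₀ h1 (le_of_lt (Real.exp_pos 1)) (by norm_num)
    calc Real.exp 1 ^ (3:ℕ) < 2.7182818286 ^ (3:ℕ) := hp
      _ < 20.0856 := by norm_num
  have h015 : (1.15 : ℝ) ≤ Real.exp 0.15 := by
    have := Real.add_one_le_exp (0.15 : ℝ); linarith
  have hsplit : Real.exp 2.85 * Real.exp 0.15 = Real.exp 3 := by
    rw [← Real.exp_add]; norm_num
  nlinarith [Real.exp_pos (2.85 : ℝ)]

lemma log3_le : Real.log 3 ≤ 1.10223 := by
  have h9 : Real.log 9 = 2 * Real.log 3 := by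
    rw [show (9:ℝ) = 3 ^ (2:ℕ) by norm_num, Real.log_pow]; push_cast; ring
  have h8 : Real.log 8 = 3 * Real.log 2 := by
    rw [show (8:ℝ) = 2 ^ (3:ℕ) by norm_num, Real.log_pow]; push_cast; ring
  have h98 : Real.log 9 = Real.log 8 + Real.log (9/8) := by
    rw [← Real.log_mul (by norm_num) (by norm_num)]; norm_num
  have hle : Real.log (9/8) ≤ 9/8 - 1 := Real.log_le_sub_one_of_pos (by norm_num)
  have h2 : Real.log 2 < 0.6931471808 := Real.log_two_lt_d9
  linarith

lemma exp_sum_lt : 2 * Real.exp (-2) + Real.exp (-1) < 1 := by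
  have h := Real.exp_one_gt_d9
  have h1 : Real.exp (-1) = (Real.exp 1)⁻¹ := by rw [Real.exp_neg]
  have h2 : Real.exp (-2) = ((Real.exp 1)⁻¹)^(2:ℕ) := by
    rw [← Real.exp_neg, ← Real.exp_nat_mul]; norm_num
  have hp : (0:ℝ) < Real.exp 1 := Real.exp_pos 1
  rw [h1, h2]
  have hinv : (Real.exp 1)⁻¹ < 2.7182818283⁻¹ := by
    apply inv_strictAnti₀ (by norm_num) h
  have hnn : (0:ℝ) ≤ (Real.exp 1)⁻¹ := by positivity
  nlinarith

lemma core_L (L : ℝ) (hL : 2.85 ≤ L) : 4*L + 9*Real.log L + 2 + 1/18 ≤ L^3 := by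
  have hLpos : (0:ℝ) < L := by linarith
  have h1 : Real.log (L/3) ≤ L/3 - 1 := Real.log_le_sub_one_of_pos (by linarith)
  have h2 : Real.log (L/3) = Real.log L - Real.log 3 :=
    Real.log_div (by linarith) (by norm_num)
  have h3 : Real.log L ≤ L/3 - 1 + 1.10223 := by
    have := log3_le; linarith
  nlinarith [mul_nonneg (mul_nonneg (sub_nonneg.2 hL) (sub_nonneg.2 hL)) (sub_nonneg.2 hL),
    sq_nonneg (L - 2.85), sq_nonneg L]

lemma star_ineq (N Q : ℝ) (hN : 18 ≤ N) (hQ : N * (Real.log N)^3 ≤ Q) :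
    3 * Real.log Q + Real.log N + 2 ≤ (Q - 1)/N := by
  set L := Real.log N with hLdef
  have hL : 2.85 ≤ L := le_trans log18_ge (Real.log_le_log (by norm_num) hN)
  have hNpos : (0:ℝ) < N := by linarith
  set Q0 := N * L^3 with hQ0def
  have hQ0pos : 0 < Q0 := by positivity
  have hQpos : 0 < Q := lt_of_lt_of_le hQ0pos hQ
  have hlogQ : Real.log Q ≤ Real.log Q0 + (Q - Q0)/Q0 := by
    have h1 : Real.log (Q/Q0) ≤ Q/Q0 - 1 := Real.log_le_sub_one_of_pos (by positivity)
    have h2 : Real.log (Q/Q0) = Real.log Q - Real.log Q0 := Real.log_div (ne_of_gt hQpos) (ne_of_gt hQ0pos)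
    have h3 : Q/Q0 - 1 = (Q - Q0)/Q0 := by field_simp
    linarith
  have hlogQ0 : Real.log Q0 = L + 3 * Real.log L := by
    rw [hQ0def, Real.log_mul (ne_of_gt hNpos) (by positivity),
      show L^3 = L^(3:ℕ) by norm_num, Real.log_pow]
    push_cast; ring
  have hL3 : (23:ℝ) ≤ L^3 := by
    nlinarith [mul_nonneg (mul_nonneg (sub_nonneg.2 hL) (sub_nonneg.2 hL)) (sub_nonneg.2 hL)]
  have h3N : 3 * N ≤ Q0 := by rw [hQ0def]; nlinarith
  have hshift : 3 * ((Q - Q0)/Q0) ≤ (Q - Q0)/N := by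
    rw [show 3*((Q-Q0)/Q0) = (3*(Q-Q0))/Q0 by ring, div_le_div_iff₀ hQ0pos hNpos]
    nlinarith [mul_nonneg (sub_nonneg.2 hQ) (by linarith : (0:ℝ) ≤ Q0 - 3*N)]
  have hcore := core_L L hL
  have hQ0N : (Q0 - 1)/N = L^3 - 1/N := by rw [hQ0def]; field_simp
  have h1N : 1/N ≤ 1/18 := by
    rw [div_le_div_iff₀ hNpos (by norm_num : (0:ℝ) < 18)]; linarith
  have hsplit : (Q - 1)/N = (Q0 - 1)/N + (Q - Q0)/N := by ring
  have hlogL : 0 ≤ Real.log L := Real.log_nonneg (by linarith)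
  calc 3 * Real.log Q + Real.log N + 2
      ≤ 3 * (Real.log Q0 + (Q - Q0)/Q0) + L + 2 := by linarith
    _ ≤ 3 * Real.log Q0 + (Q - Q0)/N + L + 2 := by linarith
    _ = 4*L + 9 * Real.log L + 2 + (Q - Q0)/N := by rw [hlogQ0]; ring
    _ ≤ L^3 - 1/18 + (Q - Q0)/N := by linarith
    _ ≤ L^3 - 1/N + (Q - Q0)/N := by linarith
    _ = (Q - 1)/N := by rw [hsplit, hQ0N]

set_option maxHeartbeats 1600000 in
lemma numeric_bound (n q : ℕ) (hn : 18 ≤ n) (hq : (n:ℝ) * Real.log n ^ 3 ≤ (q:ℝ)) :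
    (q:ℝ)^2 * (n:ℝ)^2 * Real.exp (-((q:ℝ)^2 / (3 * (n:ℝ)^2)))
      + (q:ℝ)^2 * ((q:ℝ)+1) * (n:ℝ) * (((n:ℝ)-1)/(n:ℝ))^(q-1) < 1 := by
  set N := (n:ℝ) with hNdef
  set Q := (q:ℝ) with hQdef
  have hN : 18 ≤ N := by rw [hNdef]; exact_mod_cast hn
  have hNpos : (0:ℝ) < N := by linarith
  set L := Real.log N with hLdef
  have hL : 2.85 ≤ L := le_trans log18_ge (Real.log_le_log (by norm_num) hN)
  have hL3 : (23:ℝ) ≤ L^3 := by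
    nlinarith [mul_nonneg (mul_nonneg (sub_nonneg.2 hL) (sub_nonneg.2 hL)) (sub_nonneg.2 hL)]
  have hQN : 23 * N ≤ Q := by nlinarith
  have hQpos : (0:ℝ) < Q := by linarith
  have hNQ : N ≤ Q := by nlinarith
  have hstar := star_ineq N Q hN hq
  have hq1 : 1 ≤ q := by
    have h1 : (1:ℝ) ≤ Q := by linarith
    rw [hQdef] at h1
    exact_mod_cast h1
  have hcast : ((q - 1 : ℕ) : ℝ) = Q - 1 := by
    rw [hQdef]; push_cast [Nat.cast_sub hq1]; ring
  have hlogQ : (0:ℝ) ≤ Real.log Q := Real.log_nonneg (by nlinarith)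
  have hexpQ3 : Real.exp (3 * Real.log Q) = Q^(3:ℕ) := by
    rw [show (3:ℝ) = ((3:ℕ):ℝ) by norm_num, Real.exp_nat_mul, Real.exp_log hQpos]
  have hexpQ4 : Real.exp (4 * Real.log Q) = Q^(4:ℕ) := by
    rw [show (4:ℝ) = ((4:ℕ):ℝ) by norm_num, Real.exp_nat_mul, Real.exp_log hQpos]
  -- Part IA
  have hIA : Q^2 * (Q+1) * N * ((N-1)/N)^(q-1) ≤ 2 * Real.exp (-2) := by
    have hbase : (0:ℝ) ≤ (N-1)/N := div_nonneg (by linarith) (le_of_lt hNpos)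
    have hb2 : (N-1)/N ≤ Real.exp (-(1/N)) := by
      have := Real.add_one_le_exp (-(1/N))
      have heq : (N-1)/N = 1 - 1/N := by field_simp
      linarith
    have hpow : ((N-1)/N)^(q-1) ≤ Real.exp (-(1/N))^(q-1) :=
      pow_le_pow_left₀ hbase hb2 _
    have hexp : Real.exp (-(1/N))^(q-1) = Real.exp (-((Q-1)/N)) := by
      rw [← Real.exp_nat_mul, hcast]
      congr 1
      field_simp
    have hmono : Real.exp (-((Q-1)/N)) ≤ Real.exp (-(3 * Real.log Q + L + 2)) :=
      Real.exp_le_exp.2 (by linarith)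
    have hval : Real.exp (-(3 * Real.log Q + L + 2)) = (Q^(3:ℕ) * N * Real.exp 2)⁻¹ := by
      rw [Real.exp_neg]
      congr 1
      rw [Real.exp_add, Real.exp_add, hexpQ3, hLdef, Real.exp_log hNpos]
    have hx : ((N-1)/N)^(q-1) ≤ (Q^(3:ℕ) * N * Real.exp 2)⁻¹ := by
      rw [← hval]
      exact le_trans hpow (le_trans (le_of_eq hexp) hmono)
    have hnn : (0:ℝ) ≤ Q^2 * (Q+1) * N := by positivity
    calc Q^2 * (Q+1) * N * ((N-1)/N)^(q-1)
        ≤ Q^2 * (Q+1) * N * (Q^(3:ℕ) * N * Real.exp 2)⁻¹ := mul_le_mul_of_nonneg_left hx hnn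
      _ = (Q+1)/Q * (Real.exp 2)⁻¹ := by
          field_simp
      _ ≤ 2 * (Real.exp 2)⁻¹ := by
          have h2 : (Q+1)/Q ≤ 2 := by
            rw [div_le_iff₀ hQpos]; linarith
          have : (0:ℝ) ≤ (Real.exp 2)⁻¹ := by positivity
          nlinarith
      _ = 2 * Real.exp (-2) := by rw [Real.exp_neg]
  -- Part IB
  have hQ1 : N * (3 * Real.log Q + L + 2) ≤ Q - 1 := by
    rw [mul_comm]
    exact (le_div_iff₀ hNpos).1 hstar
  have hkey : 4 * Real.log Q + 1 ≤ Q^2/(3*N^2) := by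
    rw [le_div_iff₀ (by positivity)]
    nlinarith [mul_le_mul_of_nonneg_left hQ1 (by linarith : (0:ℝ) ≤ 23*N),
      mul_le_mul_of_nonneg_right hQN (le_of_lt hQpos), hlogQ, hL, hNpos]
  have hIB : Q^2 * N^2 * Real.exp (-(Q^2 / (3 * N^2))) ≤ Real.exp (-1) := by
    have hmono : Real.exp (-(Q^2/(3*N^2))) ≤ Real.exp (-(4 * Real.log Q + 1)) :=
      Real.exp_le_exp.2 (by linarith)
    have hval : Real.exp (-(4 * Real.log Q + 1)) = (Q^(4:ℕ) * Real.exp 1)⁻¹ := by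
      rw [Real.exp_neg]
      congr 1
      rw [Real.exp_add, hexpQ4]
    have hN2 : N^2 ≤ Q^2 := pow_le_pow_left₀ (le_of_lt hNpos) hNQ 2
    have hQ2N2 : Q^2 * N^2 ≤ Q^(4:ℕ) := by
      rw [show Q^(4:ℕ) = Q^2 * Q^2 by ring]
      exact mul_le_mul_of_nonneg_left hN2 (sq_nonneg Q)
    calc Q^2 * N^2 * Real.exp (-(Q^2 / (3 * N^2)))
        ≤ Q^(4:ℕ) * (Q^(4:ℕ) * Real.exp 1)⁻¹ := by
          apply mul_le_mul hQ2N2 (le_trans hmono (le_of_eq hval)) (by positivity) (by positivity)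
      _ = (Real.exp 1)⁻¹ := by
          rw [mul_inv_eq_iff_eq_mul₀ (by positivity)]
          field_simp
      _ = Real.exp (-1) := by rw [Real.exp_neg]
  have := exp_sum_lt
  linarith

lemma real_bound1 (n mm qq : ℕ) (hn : 1 ≤ n) (h2 : 2*mm ≤ qq) (h3 : qq ≤ 3*mm) :
    ((n*n-1 : ℕ)^mm * (n:ℕ)^(qq - 2*mm) : ℝ)
      ≤ (n:ℝ)^qq * Real.exp (-((qq:ℝ)/(3*(n:ℝ)^2))) := by
  have hN : (1:ℝ) ≤ (n:ℝ) := by exact_mod_cast hn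
  have hNpos : (0:ℝ) < (n:ℝ) := by linarith
  have hn2 : 1 ≤ n*n := Nat.one_le_iff_ne_zero.2 (by positivity)
  have hcast : ((n*n-1 : ℕ) : ℝ) = (n:ℝ)^2 - 1 := by
    push_cast [Nat.cast_sub hn2]; ring
  have hsplit : (n:ℝ)^qq = ((n:ℝ)^2)^mm * (n:ℝ)^(qq - 2*mm) := by
    rw [← pow_mul, ← pow_add]
    congr 1
    omega
  have hfrac : ((n:ℝ)^2 - 1) = (n:ℝ)^2 * (((n:ℝ)^2-1)/(n:ℝ)^2) := by
    field_simp
  have hbnd : (((n:ℝ)^2-1)/(n:ℝ)^2)^mm ≤ Real.exp (-((qq:ℝ)/(3*(n:ℝ)^2))) := by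
    have hb0 : (0:ℝ) ≤ ((n:ℝ)^2-1)/(n:ℝ)^2 := by
      apply div_nonneg <;> nlinarith
    have hb1 : ((n:ℝ)^2-1)/(n:ℝ)^2 ≤ Real.exp (-(1/(n:ℝ)^2)) := by
      have := Real.add_one_le_exp (-(1/(n:ℝ)^2))
      have heq : ((n:ℝ)^2-1)/(n:ℝ)^2 = 1 - 1/(n:ℝ)^2 := by field_simp
      linarith
    calc (((n:ℝ)^2-1)/(n:ℝ)^2)^mm ≤ Real.exp (-(1/(n:ℝ)^2))^mm :=
          pow_le_pow_left₀ hb0 hb1 _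
      _ = Real.exp (-((mm:ℝ)/(n:ℝ)^2)) := by
          rw [← Real.exp_nat_mul]; congr 1; field_simp
      _ ≤ Real.exp (-((qq:ℝ)/(3*(n:ℝ)^2))) := by
          apply Real.exp_le_exp.2
          rw [neg_le_neg_iff, div_le_div_iff₀ (by positivity) (by positivity)]
          have : (qq:ℝ) ≤ 3*(mm:ℝ) := by exact_mod_cast h3
          nlinarith
  calc ((n*n-1 : ℕ)^mm * (n:ℕ)^(qq - 2*mm) : ℝ)
      = (((n:ℝ)^2)^mm * (((n:ℝ)^2-1)/(n:ℝ)^2)^mm) * (n:ℝ)^(qq-2*mm) := by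
        push_cast [hcast]
        rw [← mul_pow, ← hfrac]
    _ ≤ (((n:ℝ)^2)^mm * Real.exp (-((qq:ℝ)/(3*(n:ℝ)^2)))) * (n:ℝ)^(qq-2*mm) := by
        apply mul_le_mul_of_nonneg_right _ (by positivity)
        exact mul_le_mul_of_nonneg_left hbnd (by positivity)
    _ = (n:ℝ)^qq * Real.exp (-((qq:ℝ)/(3*(n:ℝ)^2))) := by
        rw [hsplit]; ring

lemma real_bound2 (n e qq : ℕ) (hn : 1 ≤ n) (he : e ≤ qq) :
    ((n-1 : ℕ)^e * (n:ℕ)^(qq - e) : ℝ) = (n:ℝ)^qq * (((n:ℝ)-1)/(n:ℝ))^e := by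
  have hNpos : (0:ℝ) < (n:ℝ) := by exact_mod_cast hn
  have hcast : ((n-1 : ℕ) : ℝ) = (n:ℝ) - 1 := by push_cast [Nat.cast_sub hn]; ring
  have hsplit : (n:ℝ)^qq = (n:ℝ)^e * (n:ℝ)^(qq - e) := by
    rw [← pow_add]; congr 1; omega
  rw [hsplit]
  push_cast [hcast]
  rw [div_pow]
  field_simp

/-- Existence of a single good vertex-coloring `φ` by a union-bound count. -/
lemma exists_good_phi (n q : ℕ) (hn : 18 ≤ n)
    (hqn : (n : ℝ) * Real.log n ^ 3 ≤ q)
    (F : Type*) [Field F] [Fintype F] [DecidableEq F] (hcard : Fintype.card F = q) :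
    ∃ φ : F × F → Fin n,
      (∀ d : F × F, d ≠ 0 → ∀ i j : Fin n, ∃ w, φ w = i ∧ φ (w + d) = j) ∧
      (∀ (u : F × F) (s : Option F) (j : Fin n), ∃ w, slopeRel s u w ∧ φ w = j) := by
  classical
  have hn1 : 1 ≤ n := le_trans (by norm_num) hn
  have hq2 : 2 ≤ q := by
    rw [← hcard]
    exact Fintype.one_lt_card
  have hD : Fintype.card (F × F) = q * q := by
    rw [Fintype.card_prod, hcard]
  by_contra hcon
  push_neg at hcon
  -- bad event finsets
  set Bad1 : (F × F) → Fin n → Fin n → Finset ((F × F) → Fin n) :=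
    fun d i j => univ.filter (fun φ => ∀ w, ¬(φ w = i ∧ φ (w + d) = j)) with hBad1
  set Bad2 : (F × F) → Option F → Fin n → Finset ((F × F) → Fin n) :=
    fun u s j => univ.filter (fun φ => ∀ w, slopeRel s u w → φ w ≠ j) with hBad2
  set P1 : Finset ((F × F) × Fin n × Fin n) := univ.filter (fun t => t.1 ≠ 0) with hP1
  set U1 : Finset ((F × F) → Fin n) := P1.biUnion (fun t => Bad1 t.1 t.2.1 t.2.2) with hU1
  set U2 : Finset ((F × F) → Fin n) :=
    (univ : Finset ((F × F) × Option F × Fin n)).biUnion (fun t => Bad2 t.1 t.2.1 t.2.2)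
    with hU2
  have hcover : (univ : Finset ((F × F) → Fin n)) ⊆ U1 ∪ U2 := by
    intro φ _
    by_cases hG1 : ∀ d : F × F, d ≠ 0 → ∀ i j : Fin n, ∃ w, φ w = i ∧ φ (w + d) = j
    · obtain ⟨u, s, j, hno⟩ := hcon φ hG1
      refine Finset.mem_union.2 (Or.inr ?_)
      rw [hU2]
      refine Finset.mem_biUnion.2 ⟨(u, s, j), mem_univ _, ?_⟩
      rw [hBad2]
      simp only [Finset.mem_filter, Finset.mem_univ, true_and]
      exact hno
    · push_neg at hG1
      obtain ⟨d, hd, i, j, hno⟩ := hG1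
      refine Finset.mem_union.2 (Or.inl ?_)
      rw [hU1]
      refine Finset.mem_biUnion.2 ⟨(d, i, j), ?_, ?_⟩
      · rw [hP1]; simp [hd]
      · rw [hBad1]
        simp only [Finset.mem_filter, Finset.mem_univ, true_and]
        intro w hc
        exact hno w hc.1 hc.2
  -- notation for the two per-event bounds
  have hqq : (((q*q : ℕ)):ℝ) = (q:ℝ)^2 := by push_cast; ring
  set X : ℝ := Real.exp (-((q:ℝ)^2 / (3*(n:ℝ)^2))) with hX
  set Y : ℝ := (((n:ℝ)-1)/(n:ℝ))^(q-1) with hY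
  -- per-event bound for Bad1
  have hbound1 : ∀ t ∈ P1, ((Bad1 t.1 t.2.1 t.2.2).card : ℝ) ≤ (n:ℝ)^(q*q) * X := by
    rintro ⟨d, i, j⟩ ht
    have hd : d ≠ 0 := by
      rw [hP1] at ht
      simpa using ht
    obtain ⟨W, hW, h3, h2⟩ := exists_shift_free (F × F) d hd
    rw [hD] at h3 h2
    have hsub : Bad1 d i j ⊆ univ.filter (fun φ => ∀ w ∈ W, ¬(φ w = i ∧ φ (w + d) = j)) := by
      rw [hBad1]
      intro φ hφ
      simp only [Finset.mem_filter] at hφ ⊢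
      exact ⟨hφ.1, fun w _ => hφ.2 w⟩
    have hc := card_pair_avoid n d i j W hW
    rw [hD] at hc
    have hnat : (Bad1 d i j).card ≤ (n*n-1)^W.card * n^(q*q - 2*W.card) :=
      le_trans (Finset.card_le_card hsub) hc
    calc ((Bad1 d i j).card : ℝ)
        ≤ (((n*n-1)^W.card * n^(q*q - 2*W.card) : ℕ) : ℝ) := by exact_mod_cast hnat
      _ ≤ (n:ℝ)^(q*q) * Real.exp (-(((q*q : ℕ):ℝ)/(3*(n:ℝ)^2))) := by
          exact_mod_cast real_bound1 n W.card (q*q) hn1 h2 h3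
      _ = (n:ℝ)^(q*q) * X := by rw [hX, hqq]
  -- per-event bound for Bad2
  have hbound2 : ∀ t : (F × F) × Option F × Fin n,
      ((Bad2 t.1 t.2.1 t.2.2).card : ℝ) ≤ (n:ℝ)^(q*q) * Y := by
    rintro ⟨u, s, j⟩
    have hEq : Bad2 u s j
        = univ.filter (fun φ : (F × F) → Fin n =>
            ∀ w ∈ univ.filter (fun w => slopeRel s u w), φ w ≠ j) := by
      rw [hBad2]
      apply Finset.filter_congr
      intro φ _
      constructor
      · intro h w hw
        exact h w (by simpa using hw)
      · intro h w hw
        exact h w (by simpa using hw)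
    have hline : (univ.filter (fun w => slopeRel s u w)).card = q - 1 := by
      rw [card_slope_line, hcard]
    have hc := card_avoid_s14 n (univ.filter (fun w => slopeRel s u w)) j
    rw [hline, hD] at hc
    have hnat : (Bad2 u s j).card ≤ (n-1)^(q-1) * n^(q*q - (q-1)) := by
      rw [hEq, hc]
    have hle : q - 1 ≤ q*q :=
      le_trans (Nat.sub_le q 1) (Nat.le_mul_of_pos_left q (lt_of_lt_of_le (by norm_num) hq2))
    calc ((Bad2 u s j).card : ℝ)
        ≤ (((n-1)^(q-1) * n^(q*q - (q-1)) : ℕ) : ℝ) := by exact_mod_cast hnat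
      _ = (n:ℝ)^(q*q) * Y := by
          rw [hY]
          exact_mod_cast real_bound2 n (q-1) (q*q) hn1 hle
  -- union bound
  have hcardU1 : (U1.card : ℝ) ≤ (q:ℝ)^2 * (n:ℝ)^2 * ((n:ℝ)^(q*q) * X) := by
    have h1 : U1.card ≤ ∑ t ∈ P1, (Bad1 t.1 t.2.1 t.2.2).card := by
      rw [hU1]
      exact Finset.card_biUnion_le
    have h2 : ((∑ t ∈ P1, (Bad1 t.1 t.2.1 t.2.2).card : ℕ) : ℝ)
        ≤ ∑ t ∈ P1, ((n:ℝ)^(q*q) * X) := by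
      push_cast
      exact Finset.sum_le_sum hbound1
    have h3 : ∑ t ∈ P1, ((n:ℝ)^(q*q) * X) = (P1.card : ℝ) * ((n:ℝ)^(q*q) * X) := by
      rw [Finset.sum_const, nsmul_eq_mul]
    have h4 : (P1.card : ℝ) ≤ (q:ℝ)^2 * (n:ℝ)^2 := by
      have h5 : P1.card ≤ Fintype.card ((F × F) × Fin n × Fin n) := by
        rw [← Finset.card_univ]
        exact Finset.card_le_card (Finset.filter_subset _ _)
      have hcc : Fintype.card ((F × F) × Fin n × Fin n) = q*q*(n*n) := by
        simp [Fintype.card_prod, Fintype.card_fin, hD]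
      rw [hcc] at h5
      calc (P1.card : ℝ) ≤ ((q*q*(n*n) : ℕ) : ℝ) := by exact_mod_cast h5
        _ = (q:ℝ)^2 * (n:ℝ)^2 := by push_cast; ring
    have hXnn : (0:ℝ) ≤ (n:ℝ)^(q*q) * X := by positivity
    calc (U1.card : ℝ) ≤ ((∑ t ∈ P1, (Bad1 t.1 t.2.1 t.2.2).card : ℕ) : ℝ) := by
          exact_mod_cast h1
      _ ≤ (P1.card : ℝ) * ((n:ℝ)^(q*q) * X) := by rw [← h3]; exact h2
      _ ≤ (q:ℝ)^2 * (n:ℝ)^2 * ((n:ℝ)^(q*q) * X) := mul_le_mul_of_nonneg_right h4 hXnn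
  have hYnn : (0:ℝ) ≤ Y := by
    rw [hY]
    apply pow_nonneg
    apply div_nonneg _ (by positivity)
    have : (1:ℝ) ≤ (n:ℝ) := by exact_mod_cast hn1
    linarith
  have hcardU2 : (U2.card : ℝ) ≤ (q:ℝ)^2 * ((q:ℝ)+1) * (n:ℝ) * ((n:ℝ)^(q*q) * Y) := by
    have h1 : U2.card ≤ ∑ t ∈ (univ : Finset ((F × F) × Option F × Fin n)),
        (Bad2 t.1 t.2.1 t.2.2).card := by
      rw [hU2]
      exact Finset.card_biUnion_le
    have h2 : ((∑ t ∈ (univ : Finset ((F × F) × Option F × Fin n)),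
          (Bad2 t.1 t.2.1 t.2.2).card : ℕ) : ℝ)
        ≤ ∑ _t ∈ (univ : Finset ((F × F) × Option F × Fin n)), ((n:ℝ)^(q*q) * Y) := by
      push_cast
      exact Finset.sum_le_sum (fun t _ => hbound2 t)
    have h3 : ∑ _t ∈ (univ : Finset ((F × F) × Option F × Fin n)), ((n:ℝ)^(q*q) * Y)
        = (Fintype.card ((F × F) × Option F × Fin n) : ℝ) * ((n:ℝ)^(q*q) * Y) := by
      rw [Finset.sum_const, nsmul_eq_mul, Finset.card_univ]
    have h4 : (Fintype.card ((F × F) × Option F × Fin n) : ℝ)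
        = (q:ℝ)^2 * ((q:ℝ)+1) * (n:ℝ) := by
      simp only [Fintype.card_prod, Fintype.card_fin, Fintype.card_option, hD, hcard]
      push_cast
      ring
    calc (U2.card : ℝ) ≤ ((∑ t ∈ (univ : Finset ((F × F) × Option F × Fin n)),
          (Bad2 t.1 t.2.1 t.2.2).card : ℕ) : ℝ) := by exact_mod_cast h1
      _ ≤ (Fintype.card ((F × F) × Option F × Fin n) : ℝ) * ((n:ℝ)^(q*q) * Y) := by
          rw [← h3]; exact h2
      _ = (q:ℝ)^2 * ((q:ℝ)+1) * (n:ℝ) * ((n:ℝ)^(q*q) * Y) := by rw [h4]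
  -- total count
  have hΩ : (Fintype.card ((F × F) → Fin n) : ℝ) = (n:ℝ)^(q*q) := by
    rw [Fintype.card_fun, Fintype.card_fin, hD]
    push_cast
    ring
  have htot : ((n:ℝ))^(q*q) ≤ (U1.card : ℝ) + (U2.card : ℝ) := by
    have h1 : Fintype.card ((F × F) → Fin n) ≤ (U1 ∪ U2).card := by
      rw [← Finset.card_univ]
      exact Finset.card_le_card hcover
    have h2 : (U1 ∪ U2).card ≤ U1.card + U2.card := Finset.card_union_le _ _
    calc ((n:ℝ))^(q*q) = (Fintype.card ((F × F) → Fin n) : ℝ) := hΩ.symm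
      _ ≤ ((U1 ∪ U2).card : ℝ) := by exact_mod_cast h1
      _ ≤ (U1.card : ℝ) + (U2.card : ℝ) := by exact_mod_cast h2
  have hnum := numeric_bound n q hn hqn
  rw [← hX, ← hY] at hnum
  have hNQpos : (0:ℝ) < (n:ℝ)^(q*q) := by
    have h0 : (0:ℝ) < (n:ℝ) := by exact_mod_cast hn1
    positivity
  nlinarith [htot, hcardU1, hcardU2, hnum, hNQpos]

end Aux

/-- Main theorem, explicit form: for every `n ≥ 18` and every prime power
`q ≥ n (log n)³`, a good coloring `f : D × D → Fin n` exists (yielding a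
representation of `𝔏(q,n)`). -/
theorem stmt14 (n : ℕ) (hn : 18 ≤ n) (q : ℕ) (hq : IsPrimePow q)
    (hqn : (n : ℝ) * Real.log n ^ 3 ≤ q)
    (F : Type*) [Field F] [Fintype F] (hcard : Fintype.card F = q) :
    ∃ f : (F × F) × (F × F) → Fin n, IsGood f := by
  classical
  obtain ⟨φ, hφ1, hφ2⟩ := exists_good_phi n q hn hqn F hcard
  refine ⟨fun p => φ (p.1 + p.2), ?_, ?_, ?_, ?_⟩
  · -- (1a)
    intro u v huv i j
    have hd : v - u ≠ 0 := sub_ne_zero.2 (Ne.symm huv)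
    obtain ⟨w, hw1, hw2⟩ := hφ1 (v - u) hd i j
    refine ⟨w - u, ?_, ?_⟩
    · simpa [show u + (w - u) = w by abel] using hw1
    · simpa [show v + (w - u) = w + (v - u) by abel] using hw2
  · -- (1b)
    intro u v huv i j
    have hd : v - u ≠ 0 := sub_ne_zero.2 (Ne.symm huv)
    obtain ⟨w, hw1, hw2⟩ := hφ1 (v - u) hd i j
    refine ⟨w - u, ?_, ?_⟩
    · simpa [show w - u + u = w by abel] using hw1
    · simpa [show w - u + v = w + (v - u) by abel] using hw2
  · -- (2a)
    intro u z s j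
    obtain ⟨w, hw1, hw2⟩ := hφ2 (u + z) s j
    refine ⟨w - z, ?_, ?_⟩
    · have := (slopeRel_translate s z u (w - z)).1
      apply this
      simpa [show w - z + z = w by abel] using hw1
    · simpa [show w - z + z = w by abel] using hw2
  · -- (2b)
    intro u z s j
    obtain ⟨w, hw1, hw2⟩ := hφ2 (z + u) s j
    refine ⟨w - u, ?_, ?_⟩
    · have := (slopeRel_translate s u z (w - u)).1
      apply this
      simpa [show w - u + u = w by abel] using hw1
    · simpa [show u + (w - u) = w by abel] using hw2
end
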